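/- Let U > 0 and 0 < δ ≤ U be real numbers, and let S be a finite set of points contained in the square [0, U]² ⊂ ℝ². Let S̃ = {(δ·⌊x/δ⌋, δ·⌊y/δ⌋) : (x, y) ∈ S} be the set obtained by snapping each coordinate of each point down to an integer multiple of δ. Then |area(convexHull S) − area(convexHull S̃)| ≤ 4·δ·U, where area denotes the planar Lebesgue measure of the convex hull. -/

import Mathlib

open MeasureTheory Set Pointwise

lemma vol_convex_add_Icc_le (s : Set ℝ) (hs : Convex ℝ s) (hbd : Bornology.IsBounded s)
    {a b : ℝ} :
    volume (s + Icc a b) ≤ volume s + ENNReal.ofReal (b - a) := by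
  rcases s.eq_empty_or_nonempty with rfl | hne
  · simp
  have hba := hbd.bddAbove
  have hbb := hbd.bddBelow
  have h1 : s + Icc a b ⊆ Icc (sInf s + a) (sSup s + b) := by
    rintro z ⟨x, hx, t, ht, rfl⟩
    exact ⟨add_le_add (csInf_le hbb hx) ht.1, add_le_add (le_csSup hba hx) ht.2⟩
  have h2 : Ioo (sInf s) (sSup s) ⊆ s := by
    intro x hx
    obtain ⟨u, hu, hux⟩ := exists_lt_of_csInf_lt hne hx.1
    obtain ⟨v, hv, hxv⟩ := exists_lt_of_lt_csSup hne hx.2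
    exact hs.ordConnected.out hu hv ⟨hux.le, hxv.le⟩
  calc volume (s + Icc a b) ≤ volume (Icc (sInf s + a) (sSup s + b)) := measure_mono h1
    _ = ENNReal.ofReal (sSup s + b - (sInf s + a)) := Real.volume_Icc
    _ ≤ ENNReal.ofReal (sSup s - sInf s) + ENNReal.ofReal (b - a) := by
        have h : sSup s + b - (sInf s + a) = (sSup s - sInf s) + (b - a) := by ring
        rw [h]; exact ENNReal.ofReal_add_le
    _ ≤ volume s + ENNReal.ofReal (b - a) := by
        gcongr
        calc ENNReal.ofReal (sSup s - sInf s) = volume (Ioo (sInf s) (sSup s)) :=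
              (Real.volume_Ioo).symm
          _ ≤ volume s := measure_mono h2

lemma vol_add_horiz (C : Set (ℝ × ℝ)) (hC : Convex ℝ C) (hK : IsCompact C)
    {l L m M a b : ℝ} (hab : a ≤ b) (hsub : C ⊆ Icc l L ×ˢ Icc m M) :
    volume (C + Icc a b ×ˢ ({0} : Set ℝ)) ≤ volume C + ENNReal.ofReal ((b - a) * (M - m)) := by
  have hDc : IsCompact (C + Icc a b ×ˢ ({0} : Set ℝ)) :=
    hK.add (isCompact_Icc.prod isCompact_singleton)
  have hCm : MeasurableSet C := hK.measurableSet
  have hDm : MeasurableSet (C + Icc a b ×ˢ ({0} : Set ℝ)) := hDc.measurableSet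
  have key : ∀ y : ℝ, volume ((fun x => (x, y)) ⁻¹' (C + Icc a b ×ˢ ({0} : Set ℝ)))
      ≤ volume ((fun x => (x, y)) ⁻¹' C)
        + (Icc m M).indicator (fun _ => ENNReal.ofReal (b - a)) y := by
    intro y
    have hslice : (fun x => (x, y)) ⁻¹' (C + Icc a b ×ˢ ({0} : Set ℝ))
        = ((fun x => (x, y)) ⁻¹' C) + Icc a b := by
      ext x
      constructor
      · rintro ⟨⟨c1, c2⟩, hc, ⟨t1, t2⟩, ⟨ht1, ht2⟩, hsum⟩
        simp only [mem_singleton_iff] at ht2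
        subst ht2
        have hx : c1 + t1 = x := congrArg Prod.fst hsum
        have hy : c2 = y := by have := congrArg Prod.snd hsum; simpa using this
        subst hy
        exact ⟨c1, hc, t1, ht1, hx⟩
      · rintro ⟨c, hc, t, ht, rfl⟩
        exact ⟨(c, y), hc, (t, 0), ⟨ht, rfl⟩, by simp⟩
    rw [hslice]
    rcases eq_empty_or_nonempty ((fun x => (x, y)) ⁻¹' C) with he | hne
    · simp [he]
    · obtain ⟨x0, hx0⟩ := hne
      have hyI : y ∈ Icc m M := (hsub hx0).2
      rw [indicator_of_mem hyI]
      have hconv : Convex ℝ ((fun x => (x, y)) ⁻¹' C) := by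
        intro p hp q hq u v hu hv huv
        have h := hC hp hq hu hv huv
        have he : u • ((p : ℝ), y) + v • ((q : ℝ), y) = (u • p + v • q, y) := by
          simp [Prod.ext_iff, smul_eq_mul]
          rw [← add_mul, huv, one_mul]
        rwa [he] at h
      have hbd : Bornology.IsBounded ((fun x => (x, y)) ⁻¹' C) :=
        Metric.isBounded_Icc l L |>.subset (fun x hx => (hsub hx).1)
      exact vol_convex_add_Icc_le _ hconv hbd
  calc volume (C + Icc a b ×ˢ ({0} : Set ℝ))
      = ∫⁻ y, volume ((fun x => (x, y)) ⁻¹' (C + Icc a b ×ˢ ({0} : Set ℝ))) := by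
        rw [MeasureTheory.Measure.volume_eq_prod, Measure.prod_apply_symm hDm]
    _ ≤ ∫⁻ y, (volume ((fun x => (x, y)) ⁻¹' C)
          + (Icc m M).indicator (fun _ => ENNReal.ofReal (b - a)) y) := lintegral_mono key
    _ = (∫⁻ y, volume ((fun x => (x, y)) ⁻¹' C))
          + ∫⁻ y, (Icc m M).indicator (fun _ => ENNReal.ofReal (b - a)) y := by
        rw [lintegral_add_right]
        exact measurable_const.indicator measurableSet_Icc
    _ = volume C + ENNReal.ofReal ((b - a) * (M - m)) := by
        rw [← Measure.prod_apply_symm hCm, ← MeasureTheory.Measure.volume_eq_prod,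
          lintegral_indicator measurableSet_Icc, setLIntegral_const, Real.volume_Icc,
          ← ENNReal.ofReal_mul (by linarith : (0:ℝ) ≤ b - a)]

lemma vol_add_vert (C : Set (ℝ × ℝ)) (hC : Convex ℝ C) (hK : IsCompact C)
    {l L m M a b : ℝ} (hab : a ≤ b) (hsub : C ⊆ Icc l L ×ˢ Icc m M) :
    volume (C + ({0} : Set ℝ) ×ˢ Icc a b) ≤ volume C + ENNReal.ofReal ((b - a) * (L - l)) := by
  have hDc : IsCompact (C + ({0} : Set ℝ) ×ˢ Icc a b) :=
    hK.add (isCompact_singleton.prod isCompact_Icc)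
  have hCm : MeasurableSet C := hK.measurableSet
  have hDm : MeasurableSet (C + ({0} : Set ℝ) ×ˢ Icc a b) := hDc.measurableSet
  have key : ∀ x : ℝ, volume (Prod.mk x ⁻¹' (C + ({0} : Set ℝ) ×ˢ Icc a b))
      ≤ volume (Prod.mk x ⁻¹' C)
        + (Icc l L).indicator (fun _ => ENNReal.ofReal (b - a)) x := by
    intro x
    have hslice : Prod.mk x ⁻¹' (C + ({0} : Set ℝ) ×ˢ Icc a b)
        = (Prod.mk x ⁻¹' C) + Icc a b := by
      ext y
      constructor
      · rintro ⟨⟨c1, c2⟩, hc, ⟨t1, t2⟩, ⟨ht1, ht2⟩, hsum⟩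
        simp only [mem_singleton_iff] at ht1
        subst ht1
        have hy : c2 + t2 = y := congrArg Prod.snd hsum
        have hx : c1 = x := by have := congrArg Prod.fst hsum; simpa using this
        subst hx
        exact ⟨c2, hc, t2, ht2, hy⟩
      · rintro ⟨c, hc, t, ht, rfl⟩
        exact ⟨(x, c), hc, (0, t), ⟨rfl, ht⟩, by simp⟩
    rw [hslice]
    rcases eq_empty_or_nonempty (Prod.mk x ⁻¹' C) with he | hne
    · simp [he]
    · obtain ⟨y0, hy0⟩ := hne
      have hxI : x ∈ Icc l L := (hsub hy0).1
      rw [indicator_of_mem hxI]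
      have hconv : Convex ℝ (Prod.mk x ⁻¹' C) := by
        intro p hp q hq u v hu hv huv
        have h := hC hp hq hu hv huv
        have he : u • ((x : ℝ), (p : ℝ)) + v • ((x : ℝ), (q : ℝ)) = (x, u • p + v • q) := by
          simp [Prod.ext_iff, smul_eq_mul]
          rw [← add_mul, huv, one_mul]
        rwa [he] at h
      have hbd : Bornology.IsBounded (Prod.mk x ⁻¹' C) :=
        Metric.isBounded_Icc m M |>.subset (fun y hy => (hsub hy).2)
      exact vol_convex_add_Icc_le _ hconv hbd
  calc volume (C + ({0} : Set ℝ) ×ˢ Icc a b)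
      = ∫⁻ x, volume (Prod.mk x ⁻¹' (C + ({0} : Set ℝ) ×ˢ Icc a b)) := by
        rw [MeasureTheory.Measure.volume_eq_prod, Measure.prod_apply hDm]
    _ ≤ ∫⁻ x, (volume (Prod.mk x ⁻¹' C)
          + (Icc l L).indicator (fun _ => ENNReal.ofReal (b - a)) x) := lintegral_mono key
    _ = (∫⁻ x, volume (Prod.mk x ⁻¹' C))
          + ∫⁻ x, (Icc l L).indicator (fun _ => ENNReal.ofReal (b - a)) x := by
        rw [lintegral_add_right]
        exact measurable_const.indicator measurableSet_Icc
    _ = volume C + ENNReal.ofReal ((b - a) * (L - l)) := by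
        rw [← Measure.prod_apply hCm, ← MeasureTheory.Measure.volume_eq_prod,
          lintegral_indicator measurableSet_Icc, setLIntegral_const, Real.volume_Icc,
          ← ENNReal.ofReal_mul (by linarith : (0:ℝ) ≤ b - a)]

lemma vol_le_of_subset_add {U δ c : ℝ} (hU : 0 < U) (hδ : 0 < δ) (hδU : δ ≤ U)
    {K K' : Set (ℝ × ℝ)} (hKconv : Convex ℝ K) (hKcomp : IsCompact K)
    (hKsub : K ⊆ Icc (0:ℝ) U ×ˢ Icc (0:ℝ) U)
    (hsub : K' ⊆ K + Icc c (c + δ) ×ˢ Icc c (c + δ)) :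
    (volume K').toReal ≤ (volume K).toReal + 3 * (δ * U) := by
  set H : Set (ℝ × ℝ) := Icc c (c + δ) ×ˢ ({0} : Set ℝ) with hH
  set V : Set (ℝ × ℝ) := ({0} : Set ℝ) ×ˢ Icc c (c + δ) with hV
  have hQ : Icc c (c + δ) ×ˢ Icc c (c + δ) = H + V := by
    ext ⟨x, y⟩
    constructor
    · rintro ⟨hx, hy⟩
      exact ⟨(x, 0), ⟨hx, rfl⟩, (0, y), ⟨rfl, hy⟩, by simp⟩
    · rintro ⟨⟨t1, t2⟩, ⟨ht1, ht2⟩, ⟨s1, s2⟩, ⟨hs1, hs2⟩, hsum⟩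
      simp only [mem_singleton_iff] at ht2 hs1
      subst ht2; subst hs1
      have hx : t1 + 0 = x := congrArg Prod.fst hsum
      have hy : 0 + s2 = y := congrArg Prod.snd hsum
      rw [add_zero] at hx; rw [zero_add] at hy
      subst hx; subst hy
      exact ⟨ht1, hs2⟩
  have hKH_conv : Convex ℝ (K + H) := hKconv.add (convex_Icc _ _ |>.prod (convex_singleton _))
  have hKH_comp : IsCompact (K + H) := hKcomp.add (isCompact_Icc.prod isCompact_singleton)
  have hKH_sub : K + H ⊆ Icc c (U + c + δ) ×ˢ Icc (0:ℝ) U := by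
    rintro z ⟨⟨k1, k2⟩, hk, ⟨t1, t2⟩, ⟨ht1, ht2⟩, rfl⟩
    simp only [mem_singleton_iff] at ht2
    obtain ⟨hk1, hk2⟩ := hKsub hk
    subst ht2
    constructor
    · constructor
      · simpa using add_le_add hk1.1 ht1.1
      · have h := add_le_add hk1.2 ht1.2
        show k1 + t1 ≤ U + c + δ
        linarith
    · simpa using hk2
  have v1 : volume (K + H) ≤ volume K + ENNReal.ofReal (δ * U) := by
    have h := vol_add_horiz K hKconv hKcomp (by linarith : c ≤ c + δ) hKsub
    have : (c + δ - c) * (U - 0) = δ * U := by ring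
    rwa [this] at h
  have v2 : volume ((K + H) + V) ≤ volume (K + H) + ENNReal.ofReal (δ * (U + δ)) := by
    have h := vol_add_vert (K + H) hKH_conv hKH_comp (by linarith : c ≤ c + δ) hKH_sub
    have : (c + δ - c) * (U + c + δ - c) = δ * (U + δ) := by ring
    rwa [this] at h
  have hchain : volume K' ≤ volume K + ENNReal.ofReal (δ * U) + ENNReal.ofReal (δ * (U + δ)) := by
    calc volume K' ≤ volume (K + Icc c (c + δ) ×ˢ Icc c (c + δ)) := measure_mono hsub
      _ = volume ((K + H) + V) := by rw [hQ, add_assoc]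
      _ ≤ volume (K + H) + ENNReal.ofReal (δ * (U + δ)) := v2
      _ ≤ volume K + ENNReal.ofReal (δ * U) + ENNReal.ofReal (δ * (U + δ)) := by gcongr
  have hfin : volume K ≠ ⊤ := hKcomp.measure_lt_top.ne
  have := ENNReal.toReal_mono (by finiteness) hchain
  rw [ENNReal.toReal_add (by finiteness) (by finiteness),
    ENNReal.toReal_add hfin (by finiteness), ENNReal.toReal_ofReal (by positivity),
    ENNReal.toReal_ofReal (by positivity)] at this
  nlinarith

/-- Snapping each coordinate of a finite point set in `[0,U]²` down to a multiple of
`δ` changes the area of the convex hull by at most `4 δ U`. -/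
theorem area_hull_snap_bound
    (U δ : ℝ) (hU : 0 < U) (hδ : 0 < δ) (hδU : δ ≤ U)
    (S : Finset (EuclideanSpace ℝ (Fin 2)))
    (hS : ∀ p ∈ S, p 0 ∈ Set.Icc (0 : ℝ) U ∧ p 1 ∈ Set.Icc (0 : ℝ) U) :
    |(volume (convexHull ℝ (S : Set (EuclideanSpace ℝ (Fin 2))))).toReal -
        (volume (convexHull ℝ
          ((fun p : EuclideanSpace ℝ (Fin 2) =>
              (WithLp.toLp 2 ![δ * ⌊p 0 / δ⌋, δ * ⌊p 1 / δ⌋] : EuclideanSpace ℝ (Fin 2))) ''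
            (S : Set (EuclideanSpace ℝ (Fin 2)))))).toReal| ≤ 4 * δ * U := by
  classical
  set φ : EuclideanSpace ℝ (Fin 2) ≃ᵐ ℝ × ℝ :=
    (MeasurableEquiv.toLp 2 (Fin 2 → ℝ)).symm.trans (MeasurableEquiv.finTwoArrow) with hφ
  have hφapp : ∀ p : EuclideanSpace ℝ (Fin 2), φ p = (p 0, p 1) := fun _ => rfl
  have hφmp : MeasurePreserving φ volume volume :=
    (volume_preserving_finTwoArrow ℝ).comp
      (EuclideanSpace.volume_preserving_symm_measurableEquiv_toLp (Fin 2))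
  have hφlin : IsLinearMap ℝ (φ : EuclideanSpace ℝ (Fin 2) → ℝ × ℝ) :=
    ⟨fun _ _ => rfl, fun _ _ => rfl⟩
  have hvol : ∀ A : Set (EuclideanSpace ℝ (Fin 2)), MeasurableSet A →
      volume (φ '' A) = volume A := by
    intro A hA
    rw [MeasurableEquiv.image_eq_preimage_symm]
    exact (MeasurePreserving.symm φ hφmp).measure_preimage hA.nullMeasurableSet
  set snap : ℝ × ℝ → ℝ × ℝ := fun q => (δ * ⌊q.1 / δ⌋, δ * ⌊q.2 / δ⌋) with hsnap
  set T : Set (ℝ × ℝ) := φ '' (S : Set _) with hT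
  have hSfin : (S : Set (EuclideanSpace ℝ (Fin 2))).Finite := S.finite_toSet
  have hTfin : T.Finite := hSfin.image _
  have hT'fin : (snap '' T).Finite := hTfin.image _
  have h1 : volume (convexHull ℝ (S : Set (EuclideanSpace ℝ (Fin 2))))
      = volume (convexHull ℝ T) := by
    rw [hT, ← hφlin.image_convexHull]
    exact (hvol _ ((hSfin.isCompact_convexHull ℝ).measurableSet)).symm
  have h2 : volume (convexHull ℝ
        ((fun p : EuclideanSpace ℝ (Fin 2) =>
              (WithLp.toLp 2 ![δ * ⌊p 0 / δ⌋, δ * ⌊p 1 / δ⌋] : EuclideanSpace ℝ (Fin 2))) ''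
            (S : Set (EuclideanSpace ℝ (Fin 2))))) = volume (convexHull ℝ (snap '' T)) := by
    set ψ : EuclideanSpace ℝ (Fin 2) ≃ᵐ ℝ × ℝ := φ with hψ
    have hψmp : MeasurePreserving ψ volume volume := hφmp
    have hψlin : IsLinearMap ℝ (ψ : EuclideanSpace ℝ (Fin 2) → ℝ × ℝ) := ⟨fun _ _ => rfl, fun _ _ => rfl⟩
    have hvolψ : ∀ A : Set (EuclideanSpace ℝ (Fin 2)), MeasurableSet A → volume (ψ '' A) = volume A := by
      intro A hA
      rw [MeasurableEquiv.image_eq_preimage_symm]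
      exact (MeasurePreserving.symm ψ hψmp).measure_preimage hA.nullMeasurableSet
    have hAfin : (((fun p : EuclideanSpace ℝ (Fin 2) =>
              (WithLp.toLp 2 ![δ * ⌊p 0 / δ⌋, δ * ⌊p 1 / δ⌋] : EuclideanSpace ℝ (Fin 2))) ''
            (S : Set (EuclideanSpace ℝ (Fin 2)))) : Set (EuclideanSpace ℝ (Fin 2))).Finite := hSfin.image _
    have hA : ψ '' ((fun p : EuclideanSpace ℝ (Fin 2) =>
              (WithLp.toLp 2 ![δ * ⌊p 0 / δ⌋, δ * ⌊p 1 / δ⌋] : EuclideanSpace ℝ (Fin 2))) ''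
            (S : Set (EuclideanSpace ℝ (Fin 2)))) = snap '' T := by
      rw [hT, Set.image_image, Set.image_image]
      exact Set.image_congr' (fun p => rfl)
    calc volume (convexHull ℝ ((fun p : EuclideanSpace ℝ (Fin 2) =>
              (WithLp.toLp 2 ![δ * ⌊p 0 / δ⌋, δ * ⌊p 1 / δ⌋] : EuclideanSpace ℝ (Fin 2))) ''
            (S : Set (EuclideanSpace ℝ (Fin 2)))))
        = volume (ψ '' convexHull ℝ ((fun p : EuclideanSpace ℝ (Fin 2) =>
              (WithLp.toLp 2 ![δ * ⌊p 0 / δ⌋, δ * ⌊p 1 / δ⌋] : EuclideanSpace ℝ (Fin 2))) ''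
            (S : Set (EuclideanSpace ℝ (Fin 2))))) :=
          (hvolψ _ (hAfin.isCompact_convexHull ℝ).measurableSet).symm
      _ = volume (convexHull ℝ (ψ '' ((fun p : EuclideanSpace ℝ (Fin 2) =>
              (WithLp.toLp 2 ![δ * ⌊p 0 / δ⌋, δ * ⌊p 1 / δ⌋] : EuclideanSpace ℝ (Fin 2))) ''
            (S : Set (EuclideanSpace ℝ (Fin 2)))))) := by
          rw [hψlin.image_convexHull]
      _ = volume (convexHull ℝ (snap '' T)) := by rw [hA]
  have hfrac : ∀ x : ℝ, 0 ≤ x - δ * ⌊x / δ⌋ ∧ x - δ * ⌊x / δ⌋ ≤ δ := by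
    intro x
    have h1' := Int.sub_floor_div_mul_nonneg x hδ
    have h2' := Int.sub_floor_div_mul_lt x hδ
    rw [mul_comm] at h1' h2'
    exact ⟨h1', h2'.le⟩
  have hTsub : T ⊆ Icc (0:ℝ) U ×ˢ Icc (0:ℝ) U := by
    rintro q ⟨p, hp, rfl⟩
    rw [hφapp]
    exact ⟨(hS p hp).1, (hS p hp).2⟩
  have hsnapc : ∀ x : ℝ, x ∈ Icc (0:ℝ) U → δ * ⌊x / δ⌋ ∈ Icc (0:ℝ) U := by
    intro x hx
    constructor
    · have : (0:ℤ) ≤ ⌊x / δ⌋ := Int.floor_nonneg.2 (div_nonneg hx.1 hδ.le)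
      have : (0:ℝ) ≤ (⌊x / δ⌋ : ℝ) := by exact_mod_cast this
      positivity
    · linarith [(hfrac x).1, hx.2]
  have hT'sub : snap '' T ⊆ Icc (0:ℝ) U ×ˢ Icc (0:ℝ) U := by
    rintro q' ⟨q, hq, rfl⟩
    obtain ⟨hq1, hq2⟩ := hTsub hq
    exact ⟨hsnapc _ hq1, hsnapc _ hq2⟩
  have hhullTsub : convexHull ℝ T ⊆ Icc (0:ℝ) U ×ˢ Icc (0:ℝ) U :=
    convexHull_min hTsub ((convex_Icc _ _).prod (convex_Icc _ _))
  have hhullT'sub : convexHull ℝ (snap '' T) ⊆ Icc (0:ℝ) U ×ˢ Icc (0:ℝ) U :=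
    convexHull_min hT'sub ((convex_Icc _ _).prod (convex_Icc _ _))
  have hsub1 : convexHull ℝ T ⊆ convexHull ℝ (snap '' T)
      + Icc (0:ℝ) (0 + δ) ×ˢ Icc (0:ℝ) (0 + δ) := by
    refine convexHull_min ?_
      ((convex_convexHull ℝ _).add ((convex_Icc _ _).prod (convex_Icc _ _)))
    intro q hq
    refine ⟨snap q, subset_convexHull ℝ _ (mem_image_of_mem _ hq),
      (q.1 - δ * ⌊q.1 / δ⌋, q.2 - δ * ⌊q.2 / δ⌋),
      ⟨⟨(hfrac q.1).1, by simpa using (hfrac q.1).2⟩,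
       ⟨(hfrac q.2).1, by simpa using (hfrac q.2).2⟩⟩, ?_⟩
    simp [hsnap, Prod.ext_iff]
  have hsub2 : convexHull ℝ (snap '' T) ⊆ convexHull ℝ T
      + Icc (-δ) (-δ + δ) ×ˢ Icc (-δ) (-δ + δ) := by
    refine convexHull_min ?_
      ((convex_convexHull ℝ _).add ((convex_Icc _ _).prod (convex_Icc _ _)))
    rintro q' ⟨q, hq, rfl⟩
    refine ⟨q, subset_convexHull ℝ _ hq,
      (δ * ⌊q.1 / δ⌋ - q.1, δ * ⌊q.2 / δ⌋ - q.2),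
      ⟨⟨by linarith [(hfrac q.1).2], by linarith [(hfrac q.1).1]⟩,
       ⟨by linarith [(hfrac q.2).2], by linarith [(hfrac q.2).1]⟩⟩, ?_⟩
    simp [hsnap, Prod.ext_iff]
  have b1 := vol_le_of_subset_add hU hδ hδU (convex_convexHull ℝ (snap '' T))
    (hT'fin.isCompact_convexHull ℝ) hhullT'sub hsub1
  have b2 := vol_le_of_subset_add hU hδ hδU (convex_convexHull ℝ T)
    (hTfin.isCompact_convexHull ℝ) hhullTsub hsub2
  rw [h1, h2, abs_sub_le_iff]
  constructor <;> nlinarith [b1, b2]
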